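/- (Contraction of coherent states.) For every (q,p) ∈ ℝ²: for every x ∈ ℝ, lim_{ε→0⁺} ψ_ε^{a(ε),b(ε)}(q,p)(x) = exp(i·(A·(q·p/2 + x·p) + B·p))·ψ(x + q), and moreover ψ_ε^{a(ε),b(ε)}(q,p) converges as ε → 0⁺ in the norm of L²(ℝ) to the function x ↦ exp(i·(A·(q·p/2 + x·p) + B·p))·ψ(x + q). -/

import Mathlib

open MeasureTheory Filter Topology
open scoped ENNReal NNReal

/-- `D_ε(c) = (exp(−εc) − 1)/(−εc)` for `c ≠ 0`, `D_ε(0) = 1`. -/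
noncomputable def Dfun (ε c : ℝ) : ℝ :=
  if c = 0 then 1 else (Real.exp (-(ε * c)) - 1) / (-(ε * c))

private lemma aux_exp_deriv (c ε : ℝ) :
    HasDerivAt (fun t : ℝ => Real.exp (-(t * c))) (-c * Real.exp (-(ε * c))) ε := by
  have h : HasDerivAt (fun t : ℝ => -(t * c)) (-c) ε := (hasDerivAt_mul_const c).neg
  simpa [mul_comm] using h.exp

private lemma key_lim (q x : ℝ) :
    Tendsto (fun ε : ℝ => (1 - Dfun ε q * Real.exp (-(ε * x))) / ε) (𝓝[>] (0:ℝ))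
      (𝓝 (q / 2 + x)) := by
  by_cases hq : q = 0
  · subst hq
    have hD : ∀ ε : ℝ, Dfun ε 0 = 1 := fun ε => if_pos rfl
    simp only [hD, one_mul]
    have h := HasDerivAt.lhopital_zero_nhdsGT
      (f := fun ε : ℝ => 1 - Real.exp (-(ε * x)))
      (f' := fun ε : ℝ => 0 - (-x * Real.exp (-(ε * x))))
      (g := fun ε : ℝ => ε) (g' := fun _ => 1) (a := 0) (l := 𝓝 (0 / 2 + x))
      (Eventually.of_forall fun ε => (hasDerivAt_const ε (1:ℝ)).sub (aux_exp_deriv x ε))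
      (Eventually.of_forall fun ε => hasDerivAt_id ε)
      (Eventually.of_forall fun _ => one_ne_zero) ?_ ?_ ?_
    · exact h
    · have : Continuous fun ε : ℝ => 1 - Real.exp (-(ε * x)) := by continuity
      have := this.tendsto' 0 0 (by simp)
      exact this.mono_left nhdsWithin_le_nhds
    · exact tendsto_id.mono_left nhdsWithin_le_nhds
    · have : Continuous fun ε : ℝ => (0 - (-x * Real.exp (-(ε * x)))) / 1 := by continuity
      have := this.tendsto' 0 (0 / 2 + x) (by simp)
      exact this.mono_left nhdsWithin_le_nhds
  · -- q ≠ 0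
    have hG : Tendsto
        (fun ε : ℝ => (ε * q + Real.exp (-(ε * (q + x))) - Real.exp (-(ε * x))) / (ε ^ 2 * q))
        (𝓝[>] (0:ℝ)) (𝓝 (q / 2 + x)) := by
      have hinner : Tendsto
          (fun ε : ℝ => (q + (-(q + x)) * Real.exp (-(ε * (q + x))) - (-x) * Real.exp (-(ε * x)))
            / (2 * ε * q)) (𝓝[>] (0:ℝ)) (𝓝 (q / 2 + x)) := by
        refine HasDerivAt.lhopital_zero_nhdsGT
          (f' := fun ε : ℝ => 0 + (-(q + x)) * ((-(q + x)) * Real.exp (-(ε * (q + x))))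
            - (-x) * ((-x) * Real.exp (-(ε * x))))
          (g' := fun _ : ℝ => 2 * q)
          (Eventually.of_forall fun ε =>
            ((hasDerivAt_const ε q).add ((aux_exp_deriv (q + x) ε).const_mul (-(q + x)))).sub
              ((aux_exp_deriv x ε).const_mul (-x)))
          (Eventually.of_forall fun ε => ?_)
          (Eventually.of_forall fun _ => by
            simpa using mul_ne_zero (two_ne_zero (α := ℝ)) hq) ?_ ?_ ?_
        · have : HasDerivAt (fun t : ℝ => 2 * (t * q)) (2 * q) ε :=
            (hasDerivAt_mul_const q).const_mul 2
          simpa [mul_assoc] using this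
        · have : Continuous fun ε : ℝ =>
              q + (-(q + x)) * Real.exp (-(ε * (q + x))) - (-x) * Real.exp (-(ε * x)) := by
            continuity
          have := this.tendsto' 0 0 (by simp)
          exact this.mono_left nhdsWithin_le_nhds
        · have : Continuous fun ε : ℝ => 2 * ε * q := by continuity
          have := this.tendsto' 0 0 (by simp)
          exact this.mono_left nhdsWithin_le_nhds
        · have hc : Continuous fun ε : ℝ =>
              (0 + (-(q + x)) * ((-(q + x)) * Real.exp (-(ε * (q + x))))
                - (-x) * ((-x) * Real.exp (-(ε * x)))) / (2 * q) := by continuity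
          have := hc.tendsto' 0 (q / 2 + x) (by
            simp only [Real.exp_zero, mul_zero, zero_mul, neg_zero]
            field_simp
            ring)
          exact this.mono_left nhdsWithin_le_nhds
      refine HasDerivAt.lhopital_zero_nhdsGT
        (f' := fun ε : ℝ => q + (-(q + x)) * Real.exp (-(ε * (q + x))) - (-x) * Real.exp (-(ε * x)))
        (g' := fun ε : ℝ => 2 * ε * q)
        (Eventually.of_forall fun ε =>
          ((hasDerivAt_mul_const q).add (aux_exp_deriv (q + x) ε)).sub (aux_exp_deriv x ε))
        (Eventually.of_forall fun ε => ?_) ?_ ?_ ?_ hinner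
      · have : HasDerivAt (fun t : ℝ => t ^ 2 * q) (2 * ε ^ 1 * q) ε :=
          (hasDerivAt_pow 2 ε).mul_const q
        simpa using this
      · filter_upwards [self_mem_nhdsWithin] with ε (hε : (0:ℝ) < ε)
        exact mul_ne_zero (mul_ne_zero two_ne_zero (ne_of_gt hε)) hq
      · have : Continuous fun ε : ℝ =>
            ε * q + Real.exp (-(ε * (q + x))) - Real.exp (-(ε * x)) := by continuity
        have := this.tendsto' 0 0 (by simp)
        exact this.mono_left nhdsWithin_le_nhds
      · have : Continuous fun ε : ℝ => ε ^ 2 * q := by continuity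
        have := this.tendsto' 0 0 (by simp)
        exact this.mono_left nhdsWithin_le_nhds
    refine hG.congr' ?_
    filter_upwards [self_mem_nhdsWithin] with ε (hε : (0:ℝ) < ε)
    have hε' : ε ≠ 0 := ne_of_gt hε
    rw [Dfun, if_neg hq]
    rw [show -(ε * (q + x)) = -(ε * q) + -(ε * x) by ring, Real.exp_add]
    field_simp
    ring

private lemma phase_lim (A B a₀ b₀ : ℝ) (hab : a₀ + b₀ = B) (q p x : ℝ) :
    Tendsto (fun ε : ℝ => (a₀ + A / ε) * p + (b₀ - A / ε) * p * Dfun ε q * Real.exp (-(ε * x)))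
      (𝓝[>] (0:ℝ)) (𝓝 (A * (q * p / 2 + x * p) + B * p)) := by
  have hkey := key_lim q x
  have hid : Tendsto (fun ε : ℝ => ε) (𝓝[>] (0:ℝ)) (𝓝 0) :=
    tendsto_id.mono_left nhdsWithin_le_nhds
  have hF : Tendsto (fun ε : ℝ => Dfun ε q * Real.exp (-(ε * x))) (𝓝[>] (0:ℝ)) (𝓝 1) := by
    have h2 : Tendsto
        (fun ε : ℝ => 1 - ε * ((1 - Dfun ε q * Real.exp (-(ε * x))) / ε))
        (𝓝[>] (0:ℝ)) (𝓝 (1 - 0 * (q / 2 + x))) :=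
      tendsto_const_nhds.sub (hid.mul hkey)
    rw [show (1:ℝ) - 0 * (q / 2 + x) = 1 by ring] at h2
    refine h2.congr' ?_
    filter_upwards [self_mem_nhdsWithin] with ε (hε : (0:ℝ) < ε)
    field_simp
    ring
  have hmain : Tendsto
      (fun ε : ℝ => a₀ * p + b₀ * p * (Dfun ε q * Real.exp (-(ε * x)))
        + A * p * ((1 - Dfun ε q * Real.exp (-(ε * x))) / ε))
      (𝓝[>] (0:ℝ)) (𝓝 (a₀ * p + b₀ * p * 1 + A * p * (q / 2 + x))) :=
    (tendsto_const_nhds.add (tendsto_const_nhds.mul hF)).add (tendsto_const_nhds.mul hkey)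
  have hval : a₀ * p + b₀ * p * 1 + A * p * (q / 2 + x) = A * (q * p / 2 + x * p) + B * p := by
    rw [← hab]; ring
  rw [hval] at hmain
  refine hmain.congr' ?_
  filter_upwards [self_mem_nhdsWithin] with ε (hε : (0:ℝ) < ε)
  have hε' : ε ≠ 0 := ne_of_gt hε
  field_simp
  ring

private lemma complex_lim (A B a₀ b₀ : ℝ) (hab : a₀ + b₀ = B) (q p x : ℝ) (z : ℂ) :
    Tendsto (fun ε : ℝ =>
        Complex.exp (Complex.I * Complex.ofReal ((a₀ + A / ε) * p)) *
        Complex.exp (Complex.I *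
          Complex.ofReal ((b₀ - A / ε) * p * Dfun ε q * Real.exp (-(ε * x)))) * z)
      (𝓝[>] (0:ℝ))
      (𝓝 (Complex.exp (Complex.I * Complex.ofReal (A * (q * p / 2 + x * p) + B * p)) * z)) := by
  have h := phase_lim A B a₀ b₀ hab q p x
  have h2 : Tendsto (fun ε : ℝ =>
      Complex.exp (Complex.I * Complex.ofReal ((a₀ + A / ε) * p
        + (b₀ - A / ε) * p * Dfun ε q * Real.exp (-(ε * x))))) (𝓝[>] (0:ℝ))
      (𝓝 (Complex.exp (Complex.I * Complex.ofReal (A * (q * p / 2 + x * p) + B * p)))) := by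
    exact (Complex.continuous_exp.tendsto _).comp
      (tendsto_const_nhds.mul ((Complex.continuous_ofReal.tendsto _).comp h))
  have h3 := h2.mul_const z
  refine h3.congr fun ε => ?_
  rw [Complex.ofReal_add, mul_add, Complex.exp_add]

theorem contraction_of_coherent_states
    (A B a₀ b₀ : ℝ) (hA : A ≠ 0) (hab : a₀ + b₀ = B)
    (ψ : ℝ → ℂ) (hmem : MemLp ψ 2 (volume : Measure ℝ)) (q p : ℝ) :
    (∀ x : ℝ, Filter.Tendsto (fun ε : ℝ =>
        Complex.exp (Complex.I * Complex.ofReal ((a₀ + A / ε) * p)) *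
        Complex.exp (Complex.I *
          Complex.ofReal ((b₀ - A / ε) * p * Dfun ε q * Real.exp (-(ε * x)))) *
        ψ (x + q))
      (𝓝[>] (0:ℝ))
      (𝓝 (Complex.exp (Complex.I * Complex.ofReal (A * (q * p / 2 + x * p) + B * p)) *
        ψ (x + q)))) ∧
    Filter.Tendsto (fun ε : ℝ =>
        eLpNorm (fun x : ℝ =>
          Complex.exp (Complex.I * Complex.ofReal ((a₀ + A / ε) * p)) *
          Complex.exp (Complex.I *
            Complex.ofReal ((b₀ - A / ε) * p * Dfun ε q * Real.exp (-(ε * x)))) *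
          ψ (x + q) -
          Complex.exp (Complex.I * Complex.ofReal (A * (q * p / 2 + x * p) + B * p)) *
          ψ (x + q)) 2 volume)
      (𝓝[>] (0:ℝ)) (𝓝 0) := by
  constructor
  · intro x
    exact complex_lim A B a₀ b₀ hab q p x (ψ (x + q))
  · -- L² part
    obtain ⟨hsm, -⟩ := id hmem
    set ψ' : ℝ → ℂ := hsm.mk ψ with hψ'def
    have hψ'sm : StronglyMeasurable ψ' := hsm.stronglyMeasurable_mk
    have hψeq : ψ =ᵐ[volume] ψ' := hsm.ae_eq_mk
    have hT : MeasurePreserving (fun x : ℝ => x + q) volume volume :=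
      measurePreserving_add_right volume q
    have hψeq' : (fun x : ℝ => ψ (x + q)) =ᵐ[volume] fun x => ψ' (x + q) :=
      hT.quasiMeasurePreserving.ae_eq_comp hψeq
    have hψ'qm : Measurable fun x : ℝ => ψ' (x + q) :=
      hψ'sm.measurable.comp (measurable_add_const q)
    -- notation
    set c : ℝ → ℂ := fun x =>
      Complex.exp (Complex.I * Complex.ofReal (A * (q * p / 2 + x * p) + B * p)) with hc_def
    set E : ℝ → ℝ → ℂ := fun ε x =>
      Complex.exp (Complex.I * Complex.ofReal ((a₀ + A / ε) * p)) *
      Complex.exp (Complex.I *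
        Complex.ofReal ((b₀ - A / ε) * p * Dfun ε q * Real.exp (-(ε * x)))) with hE_def
    have hunit : ∀ r : ℝ, ‖Complex.exp (Complex.I * (r : ℂ))‖ = 1 := by
      intro r
      rw [mul_comm]
      exact Complex.norm_exp_ofReal_mul_I r
    have hnormE : ∀ ε x, ‖E ε x‖ = 1 := by
      intro ε x
      rw [hE_def]
      simp only [norm_mul, hunit, mul_one]
    have hnormc : ∀ x, ‖c x‖ = 1 := fun x => hunit _
    have hcont : ∀ ε, Continuous fun x => E ε x := by
      intro ε
      have h1 : Continuous fun x : ℝ => (b₀ - A / ε) * p * Dfun ε q * Real.exp (-(ε * x)) :=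
        continuous_const.mul (Real.continuous_exp.comp (by continuity))
      exact continuous_const.mul (Complex.continuous_exp.comp
        (continuous_const.mul (Complex.continuous_ofReal.comp h1)))
    have hcontc : Continuous c :=
      Complex.continuous_exp.comp (continuous_const.mul
        (Complex.continuous_ofReal.comp (by continuity)))
    have hmeasd : ∀ ε, Measurable fun x => E ε x * ψ' (x + q) - c x * ψ' (x + q) :=
      fun ε => (((hcont ε).measurable).mul hψ'qm).sub ((hcontc.measurable).mul hψ'qm)
    -- Memℒp of translated ψ'
    have hmem' : MemLp (fun x : ℝ => ψ' (x + q)) 2 volume :=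
      (hmem.ae_eq hψeq).comp_measurePreserving hT
    have hfin : ∫⁻ x, ((‖ψ' (x + q)‖₊ : ℝ≥0∞)) ^ (2 : ℕ) ∂volume ≠ ⊤ := by
      have h := lintegral_rpow_enorm_lt_top_of_eLpNorm_lt_top
        (f := fun x : ℝ => ψ' (x + q)) (two_ne_zero) (by norm_num) hmem'.2
      rw [ENNReal.toReal_ofNat] at h
      simpa [ENNReal.rpow_two, enorm_eq_nnnorm] using h.ne
    -- dominated convergence for the lintegrals
    have hlim0 : Tendsto
        (fun ε : ℝ => ∫⁻ x, ((‖E ε x * ψ' (x + q) - c x * ψ' (x + q)‖₊ : ℝ≥0∞)) ^ (2 : ℕ) ∂volume)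
        (𝓝[>] (0:ℝ)) (𝓝 0) := by
      have h := tendsto_lintegral_filter_of_dominated_convergence
        (μ := (volume : Measure ℝ)) (l := 𝓝[>] (0:ℝ))
        (F := fun ε x => ((‖E ε x * ψ' (x + q) - c x * ψ' (x + q)‖₊ : ℝ≥0∞)) ^ (2 : ℕ))
        (f := fun _ => (0 : ℝ≥0∞))
        (bound := fun x => ((2 : ℝ≥0∞) * (‖ψ' (x + q)‖₊ : ℝ≥0∞)) ^ (2 : ℕ))
        (Eventually.of_forall fun ε => ((hmeasd ε).nnnorm.coe_nnreal_ennreal).pow_const 2)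
        (Eventually.of_forall fun ε => ae_of_all _ fun x => by
          have h1 : ‖E ε x * ψ' (x + q) - c x * ψ' (x + q)‖ ≤ 2 * ‖ψ' (x + q)‖ := by
            calc ‖E ε x * ψ' (x + q) - c x * ψ' (x + q)‖
                ≤ ‖E ε x * ψ' (x + q)‖ + ‖c x * ψ' (x + q)‖ := norm_sub_le _ _
              _ = 2 * ‖ψ' (x + q)‖ := by
                  simp only [norm_mul, hunit, hnormE, hnormc, one_mul]; ring
          have h2 : (‖E ε x * ψ' (x + q) - c x * ψ' (x + q)‖₊ : ℝ≥0∞)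
              ≤ (2 : ℝ≥0∞) * (‖ψ' (x + q)‖₊ : ℝ≥0∞) := by
            rw [show ((2 : ℝ≥0∞) * (‖ψ' (x + q)‖₊ : ℝ≥0∞))
                = ((2 * ‖ψ' (x + q)‖₊ : ℝ≥0) : ℝ≥0∞) by push_cast; ring]
            rw [ENNReal.coe_le_coe, ← NNReal.coe_le_coe]
            simpa using h1
          exact pow_le_pow_left' h2 2)
        (by
          have : ∀ x : ℝ, ((2 : ℝ≥0∞) * (‖ψ' (x + q)‖₊ : ℝ≥0∞)) ^ (2 : ℕ)
              = 4 * ((‖ψ' (x + q)‖₊ : ℝ≥0∞)) ^ (2 : ℕ) := by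
            intro x; rw [mul_pow]; norm_num
          simp_rw [this]
          rw [lintegral_const_mul 4 (hψ'qm.nnnorm.coe_nnreal_ennreal.pow_const 2)]
          exact ENNReal.mul_ne_top (by norm_num) hfin)
        (ae_of_all _ fun x => by
          have hx : Tendsto (fun ε : ℝ => E ε x * ψ' (x + q) - c x * ψ' (x + q))
              (𝓝[>] (0:ℝ)) (𝓝 0) := by
            have := (complex_lim A B a₀ b₀ hab q p x (ψ' (x + q))).sub
              (tendsto_const_nhds (x := c x * ψ' (x + q)))
            simpa [hE_def, hc_def, sub_self] using this
          have h2 : Tendsto (fun ε : ℝ =>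
              ((‖E ε x * ψ' (x + q) - c x * ψ' (x + q)‖₊ : ℝ≥0∞))) (𝓝[>] (0:ℝ)) (𝓝 0) := by
            have := ENNReal.tendsto_coe.2 hx.nnnorm
            simpa using this
          simpa using ENNReal.Tendsto.pow h2 (n := 2))
      simpa [lintegral_zero] using h
    -- conclude
    have hform : ∀ ε : ℝ, eLpNorm (fun x : ℝ =>
        Complex.exp (Complex.I * Complex.ofReal ((a₀ + A / ε) * p)) *
        Complex.exp (Complex.I *
          Complex.ofReal ((b₀ - A / ε) * p * Dfun ε q * Real.exp (-(ε * x)))) *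
        ψ (x + q) -
        Complex.exp (Complex.I * Complex.ofReal (A * (q * p / 2 + x * p) + B * p)) *
        ψ (x + q)) 2 volume
        = (∫⁻ x, ((‖E ε x * ψ' (x + q) - c x * ψ' (x + q)‖₊ : ℝ≥0∞)) ^ (2 : ℕ) ∂volume)
          ^ (1 / 2 : ℝ) := by
      intro ε
      have hae : (fun x : ℝ =>
          Complex.exp (Complex.I * Complex.ofReal ((a₀ + A / ε) * p)) *
          Complex.exp (Complex.I *
            Complex.ofReal ((b₀ - A / ε) * p * Dfun ε q * Real.exp (-(ε * x)))) *
          ψ (x + q) -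
          Complex.exp (Complex.I * Complex.ofReal (A * (q * p / 2 + x * p) + B * p)) *
          ψ (x + q)) =ᵐ[volume] fun x => E ε x * ψ' (x + q) - c x * ψ' (x + q) := by
        filter_upwards [hψeq'] with x hx
        simp only [hE_def, hc_def, hx]
      rw [eLpNorm_congr_ae hae,
        eLpNorm_eq_lintegral_rpow_enorm_toReal two_ne_zero (by norm_num)]
      rw [ENNReal.toReal_ofNat]
      simp_rw [ENNReal.rpow_two]
      simp only [enorm_eq_nnnorm]
    rw [show (𝓝 (0 : ℝ≥0∞)) = 𝓝 ((0 : ℝ≥0∞) ^ (1 / 2 : ℝ)) by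
      rw [ENNReal.zero_rpow_of_pos (by norm_num)]]
    refine Tendsto.congr (fun ε => (hform ε).symm) ?_
    exact (ENNReal.continuous_rpow_const.tendsto (0 : ℝ≥0∞)).comp hlim0
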